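/- If a metric space X is K-cliquey for some K > 1, then X is K'-cliquey for every K' > 1. -/

import Mathlib

open Metric

/-- Greedy construction of a pre-monochromatic sequence for a pair coloring. -/
lemma greedy {α : Type*} [DecidableEq α] (t : ℕ) (c : α → α → Fin (t+1)) :
    ∀ (L : ℕ) (S : Finset α), (t+2)^L ≤ S.card →
    ∃ (a : Fin L → α) (col : Fin L → Fin (t+1)),
      (∀ i, a i ∈ S) ∧ Function.Injective a ∧
      ∀ i j : Fin L, i < j → c (a i) (a j) = col i := by
  intro L
  induction L with
  | zero =>
    intro S _
    exact ⟨Fin.elim0, Fin.elim0, fun i => i.elim0, fun i => i.elim0, fun i => i.elim0⟩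
  | succ L ih =>
    intro S hS
    have hpos : 0 < S.card := lt_of_lt_of_le (Nat.pow_pos (by omega)) hS
    obtain ⟨x, hx⟩ := Finset.card_pos.mp hpos
    have hsum : (S.erase x).card =
        ∑ k : Fin (t+1), ((S.erase x).filter (fun y => c x y = k)).card :=
      Finset.card_eq_sum_card_fiberwise (fun y _ => Finset.mem_univ (c x y))
    have hbig : ∃ k : Fin (t+1), (t+2)^L ≤ ((S.erase x).filter (fun y => c x y = k)).card := by
      by_contra hcon
      push_neg at hcon
      set Q := ∑ k : Fin (t+1), ((S.erase x).filter (fun y => c x y = k)).card with hQ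
      have f1 : Q + (t+1) ≤ (t+1) * (t+2)^L := by
        calc Q + (t+1) = ∑ k : Fin (t+1), (((S.erase x).filter (fun y => c x y = k)).card + 1) := by
              rw [Finset.sum_add_distrib]; simp [hQ]
          _ ≤ ∑ _k : Fin (t+1), (t+2)^L := by
              apply Finset.sum_le_sum; intro k _; exact hcon k
          _ = (t+1) * (t+2)^L := by simp [Finset.sum_const, mul_comm]
      have f2 : (t+2) * (t+2)^L ≤ Q + 1 := by
        have h2 : (t+2)^(L+1) - 1 ≤ Q := by
          rw [← hsum, Finset.card_erase_of_mem hx]; omega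
        have h3 : (t+2)^(L+1) = (t+2) * (t+2)^L := by ring
        have h4 : 1 ≤ (t+2)^(L+1) := Nat.one_le_pow _ _ (by omega)
        omega
      have f3 : 1 ≤ (t+2)^L := Nat.one_le_pow _ _ (by omega)
      nlinarith [f1, f2, f3]
    obtain ⟨k, hk⟩ := hbig
    obtain ⟨a, col, hmem, hinj, hcol⟩ := ih _ hk
    have hne : ∀ i, a i ≠ x := fun i =>
      Finset.ne_of_mem_erase (Finset.mem_of_mem_filter _ (hmem i))
    refine ⟨Fin.cons x a, Fin.cons k col, ?_, ?_, ?_⟩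
    · intro i
      refine Fin.cases ?_ ?_ i
      · simpa using hx
      · intro i'
        simp only [Fin.cons_succ]
        exact Finset.mem_of_mem_erase (Finset.mem_of_mem_filter _ (hmem i'))
    · rw [Fin.cons_injective_iff]
      exact ⟨fun ⟨i, hi⟩ => hne i hi, hinj⟩
    · intro i j
      refine Fin.cases ?_ ?_ i
      · intro h0j
        obtain ⟨j', rfl⟩ := Fin.eq_succ_of_ne_zero (Fin.pos_iff_ne_zero.mp h0j)
        simp only [Fin.cons_zero, Fin.cons_succ]
        have := hmem j'
        rw [Finset.mem_filter] at this
        exact this.2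
      · intro i' hij
        have hjne : j ≠ 0 := by
          intro hz; rw [hz] at hij; exact (Fin.not_lt_zero _) hij
        obtain ⟨j', rfl⟩ := Fin.eq_succ_of_ne_zero hjne
        simp only [Fin.cons_succ]
        exact hcol i' j' (Fin.succ_lt_succ_iff.mp hij)

/-- Finite Ramsey theorem for pairs: any symmetric `(t+1)`-coloring of the pairs of
`(t+2)^((t+1)*n)` points admits a monochromatic subset of size `n`. -/
lemma ramseyPairs (t n : ℕ) (c : Fin ((t+2)^((t+1)*n)) → Fin ((t+2)^((t+1)*n)) → Fin (t+1))
    (hsym : ∀ i j, c i j = c j i) :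
    ∃ (f : Fin n → Fin ((t+2)^((t+1)*n))) (s : Fin (t+1)),
      Function.Injective f ∧ ∀ i j, i ≠ j → c (f i) (f j) = s := by
  obtain ⟨a, col, -, hinj, hcol⟩ := greedy t c ((t+1)*n) Finset.univ (by simp)
  rcases Nat.eq_zero_or_pos n with hn | hn
  · subst hn
    exact ⟨Fin.elim0, ⟨0, by omega⟩, fun i => i.elim0, fun i => i.elim0⟩
  have hpig : ∃ s : Fin (t+1),
      n ≤ (Finset.univ.filter (fun i : Fin ((t+1)*n) => col i = s)).card := by
    by_contra hcon
    push_neg at hcon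
    have hsum : (Finset.univ : Finset (Fin ((t+1)*n))).card =
        ∑ s : Fin (t+1), (Finset.univ.filter (fun i : Fin ((t+1)*n) => col i = s)).card :=
      Finset.card_eq_sum_card_fiberwise (fun i _ => Finset.mem_univ (col i))
    have h1 : (∑ s : Fin (t+1),
        (Finset.univ.filter (fun i : Fin ((t+1)*n) => col i = s)).card) + (t+1)
        ≤ (t+1) * n := by
      calc (∑ s : Fin (t+1), (Finset.univ.filter (fun i : Fin ((t+1)*n) => col i = s)).card) + (t+1)
          = ∑ s : Fin (t+1), ((Finset.univ.filter (fun i : Fin ((t+1)*n) => col i = s)).card + 1) := by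
            rw [Finset.sum_add_distrib]; simp
        _ ≤ ∑ _s : Fin (t+1), n := by
            apply Finset.sum_le_sum; intro s _; exact hcon s
        _ = (t+1) * n := by simp [Finset.sum_const, mul_comm]
    have h2 : (Finset.univ : Finset (Fin ((t+1)*n))).card = (t+1)*n := by simp
    omega
  obtain ⟨s, hs⟩ := hpig
  obtain ⟨G, hGsub, hGcard⟩ := Finset.exists_subset_card_eq hs
  refine ⟨fun i => a (G.orderIsoOfFin hGcard i), s, ?_, ?_⟩
  · intro i j hij
    exact (G.orderIsoOfFin hGcard).injective (Subtype.ext (hinj hij))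
  · intro i j hij
    have hGmem : ∀ u : Fin n, col ((G.orderIsoOfFin hGcard u) : Fin ((t+1)*n)) = s := by
      intro u
      have := hGsub (G.orderIsoOfFin hGcard u).2
      rw [Finset.mem_filter] at this
      exact this.2
    show c (a (G.orderIsoOfFin hGcard i)) (a (G.orderIsoOfFin hGcard j)) = s
    rcases lt_trichotomy ((G.orderIsoOfFin hGcard i) : Fin ((t+1)*n))
      ((G.orderIsoOfFin hGcard j) : Fin ((t+1)*n)) with h | h | h
    · rw [hcol _ _ h, hGmem i]
    · exact absurd (Subtype.ext h) (fun he => hij ((G.orderIsoOfFin hGcard).injective he))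
    · rw [hsym, hcol _ _ h, hGmem j]

/-- `N` distinct points form an `(N,K)`-clique if the maximum pairwise distance is
at most `K` times the minimum pairwise distance. -/
def IsNKClique {X : Type*} [MetricSpace X] (N : ℕ) (K : ℝ) (x : Fin N → X) : Prop :=
  Function.Injective x ∧ ∀ i j k l : Fin N, i ≠ j → k ≠ l →
    dist (x i) (x j) ≤ K * dist (x k) (x l)

/-- `X` is `K`-cliquey if it contains an `(N,K)`-clique for every `N`. -/
def IsCliquey (X : Type*) [MetricSpace X] (K : ℝ) : Prop :=
  ∀ N : ℕ, ∃ x : Fin N → X, IsNKClique N K x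

/-- If `X` is `K`-cliquey for some `K > 1`, then `X` is `K'`-cliquey for every `K' > 1`. -/
theorem cliquey_for_some_iff_for_all (X : Type*) [MetricSpace X]
    (h : ∃ K : ℝ, 1 < K ∧ IsCliquey X K) :
    ∀ K' : ℝ, 1 < K' → IsCliquey X K' := by
  obtain ⟨K, hK, hcl⟩ := h
  intro K' hK' N
  rcases Nat.eq_zero_or_pos N with hN | hN
  · subst hN
    exact ⟨Fin.elim0, fun i => i.elim0, fun i => i.elim0⟩
  obtain ⟨t, ht⟩ : ∃ t : ℕ, K^2 ≤ K'^(t+1) := by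
    obtain ⟨n, hn⟩ := pow_unbounded_of_one_lt (K^2) hK'
    exact ⟨n, le_trans hn.le (pow_le_pow_right₀ (le_of_lt hK') (by omega))⟩
  obtain ⟨x, hxinj, hxpair⟩ := hcl ((t+2)^((t+1)*N))
  have hM2 : 2 ≤ (t+2)^((t+1)*N) := by
    calc 2 ≤ t+2 := by omega
      _ = (t+2)^1 := (pow_one _).symm
      _ ≤ (t+2)^((t+1)*N) := Nat.pow_le_pow_right (by omega) (by nlinarith)
  have hKpos : 0 < K := lt_trans one_pos hK
  have hK'pos : 0 < K' := lt_trans one_pos hK'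
  set p0 : Fin ((t+2)^((t+1)*N)) := ⟨0, by omega⟩ with hp0
  set p1 : Fin ((t+2)^((t+1)*N)) := ⟨1, by omega⟩ with hp1
  have hp01 : p0 ≠ p1 := by simp [hp0, hp1, Fin.ext_iff]
  have hdpos : 0 < dist (x p0) (x p1) := by
    rw [dist_pos]; exact fun he => hp01 (hxinj he)
  set m₀ : ℝ := dist (x p0) (x p1) / K with hm₀
  have hm₀pos : 0 < m₀ := div_pos hdpos hKpos
  have hub : ∀ i j : Fin ((t+2)^((t+1)*N)), i ≠ j →
      ∃ s : ℕ, s ≤ t ∧ dist (x i) (x j) ≤ m₀ * K'^(s+1) := by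
    intro i j hij
    refine ⟨t, le_refl t, ?_⟩
    have h1 : dist (x i) (x j) ≤ K * dist (x p0) (x p1) := hxpair i j p0 p1 hij hp01
    have h2 : K * dist (x p0) (x p1) = K^2 * m₀ := by
      rw [hm₀]; field_simp
    calc dist (x i) (x j) ≤ K^2 * m₀ := h2 ▸ h1
      _ ≤ K'^(t+1) * m₀ := by nlinarith
      _ = m₀ * K'^(t+1) := mul_comm _ _
  have hlb : ∀ i j : Fin ((t+2)^((t+1)*N)), i ≠ j → m₀ ≤ dist (x i) (x j) := by
    intro i j hij
    have h1 : dist (x p0) (x p1) ≤ K * dist (x i) (x j) := hxpair p0 p1 i j hp01 hij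
    rw [hm₀, div_le_iff₀ hKpos]
    linarith [h1, mul_comm K (dist (x i) (x j))]
  have hex : ∀ i j : Fin ((t+2)^((t+1)*N)), ∃ s : ℕ, dist (x i) (x j) ≤ m₀ * K'^(s+1) := by
    intro i j
    rcases eq_or_ne i j with rfl | hij
    · exact ⟨0, by simp; positivity⟩
    · obtain ⟨s, _, hs⟩ := hub i j hij
      exact ⟨s, hs⟩
  have hfindlt : ∀ i j, Nat.find (hex i j) ≤ t := by
    intro i j
    rcases eq_or_ne i j with rfl | hij
    · exact le_trans (Nat.find_le (by simp; positivity)) (Nat.zero_le t)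
    · obtain ⟨s, hst, hs⟩ := hub i j hij
      exact le_trans (Nat.find_le hs) hst
  set c : Fin ((t+2)^((t+1)*N)) → Fin ((t+2)^((t+1)*N)) → Fin (t+1) :=
    fun i j => ⟨Nat.find (hex i j), by have := hfindlt i j; omega⟩ with hc
  have hcsym : ∀ i j, c i j = c j i := by
    intro i j
    simp only [hc, Fin.mk.injEq]
    congr 1
    rw [dist_comm]
  obtain ⟨f, s, hfinj, hfmono⟩ := ramseyPairs t N c hcsym
  refine ⟨fun i => x (f i), ?_, ?_⟩
  · exact hxinj.comp hfinj
  · intro i j k l hij hkl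
    have hfij : f i ≠ f j := fun he => hij (hfinj he)
    have hfkl : f k ≠ f l := fun he => hkl (hfinj he)
    have hcij := hfmono i j hij
    have hckl := hfmono k l hkl
    have hup : dist (x (f i)) (x (f j)) ≤ m₀ * K'^((s:ℕ)+1) := by
      have hspec := Nat.find_spec (hex (f i) (f j))
      have heq : Nat.find (hex (f i) (f j)) = (s : ℕ) := by
        have := congrArg Fin.val hcij
        simpa [hc] using this
      rwa [heq] at hspec
    have hlow : m₀ * K'^(s:ℕ) ≤ dist (x (f k)) (x (f l)) := by
      have heq : Nat.find (hex (f k) (f l)) = (s : ℕ) := by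
        have := congrArg Fin.val hckl
        simpa [hc] using this
      rcases Nat.eq_zero_or_pos (s : ℕ) with hs0 | hs0
      · rw [hs0]
        simpa using hlb (f k) (f l) hfkl
      · have hmin := Nat.find_min (hex (f k) (f l)) (m := (s:ℕ) - 1) (by omega)
        push_neg at hmin
        have hss : (s:ℕ) - 1 + 1 = (s:ℕ) := by omega
        rw [hss] at hmin
        exact hmin.le
    calc dist (x (f i)) (x (f j)) ≤ m₀ * K'^((s:ℕ)+1) := hup
      _ = K' * (m₀ * K'^(s:ℕ)) := by ring
      _ ≤ K' * dist (x (f k)) (x (f l)) := by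
          apply mul_le_mul_of_nonneg_left hlow (le_of_lt hK'pos)
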